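/- Every univariate real polynomial of odd degree 2n+1 that is nonnegative on [α, β] (with α < β) can be written as (x - α) s(x) + (β - x) t(x) where s and t are sums of squares of polynomials of degree at most n. -/

import Mathlib

open Polynomial Set

/-- A univariate real polynomial is a sum of squares of polynomials of degree at most `d`. -/
def IsSumOfSquaresOfDeg (d : ℕ) (p : Polynomial ℝ) : Prop :=
  ∃ (m : ℕ) (h : Fin m → Polynomial ℝ),
    (∀ i, (h i).natDegree ≤ d) ∧ p = ∑ i, (h i) ^ 2

namespace ML


abbrev SOS := IsSumOfSquaresOfDeg

lemma sos_zero (d : ℕ) : SOS d 0 := ⟨0, ![], by simp, by simp⟩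

lemma sos_sq {g : ℝ[X]} {d : ℕ} (hg : g.natDegree ≤ d) : SOS d (g ^ 2) :=
  ⟨1, ![g], by simpa, by simp⟩

lemma sos_add {d : ℕ} {p q : ℝ[X]} (hp : SOS d p) (hq : SOS d q) : SOS d (p + q) := by
  obtain ⟨m1, h1, hd1, rfl⟩ := hp
  obtain ⟨m2, h2, hd2, rfl⟩ := hq
  refine ⟨m1 + m2, Fin.append h1 h2, ?_, ?_⟩
  · intro i
    refine Fin.addCases (fun j => ?_) (fun j => ?_) i
    · rw [Fin.append_left]; exact hd1 _
    · rw [Fin.append_right]; exact hd2 _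
  · rw [Fin.sum_univ_add]
    simp [Fin.append_left, Fin.append_right]

lemma sos_smul {d : ℕ} {p : ℝ[X]} {c : ℝ} (hc : 0 ≤ c) (hp : SOS d p) : SOS d (C c * p) := by
  obtain ⟨m, h, hd, rfl⟩ := hp
  refine ⟨m, fun i => C (Real.sqrt c) * h i, fun i => ?_, ?_⟩
  · exact le_trans (natDegree_C_mul_le _ _) (hd i)
  · rw [Finset.mul_sum]
    refine Finset.sum_congr rfl fun i _ => ?_
    rw [mul_pow, ← C_pow, Real.sq_sqrt hc]

lemma sos_mul_sq {d e : ℕ} {p g : ℝ[X]} (hp : SOS d p) (hg : g.natDegree ≤ e) :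
    SOS (d + e) (g ^ 2 * p) := by
  obtain ⟨m, h, hd, rfl⟩ := hp
  refine ⟨m, fun i => g * h i, fun i => ?_, ?_⟩
  · exact le_trans (natDegree_mul_le) (by have := hd i; omega)
  · rw [Finset.mul_sum]
    exact Finset.sum_congr rfl fun i _ => by rw [mul_pow]

lemma sos_C {d : ℕ} {c : ℝ} (hc : 0 ≤ c) : SOS d (C c) := by
  have := sos_smul hc (sos_sq (g := 1) (d := d) (by simp))
  simpa using this



/-- nonneg on open interval extends to closed interval -/
lemma nonneg_Icc_of_Ioo {a b : ℝ} (hab : a < b) {q : Polynomial ℝ}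
    (h : ∀ x ∈ Ioo a b, 0 ≤ q.eval x) : ∀ x ∈ Icc a b, 0 ≤ q.eval x := by
  have hcl : IsClosed {x : ℝ | 0 ≤ q.eval x} :=
    isClosed_le continuous_const q.continuous
  have : Icc a b ⊆ {x : ℝ | 0 ≤ q.eval x} := by
    rw [← closure_Ioo hab.ne]
    exact closure_minimal h hcl
  exact fun x hx => this hx

/-- positivity everywhere from no real root -/
lemma pos_of_no_root {p : Polynomial ℝ} (h : ∀ x : ℝ, p.eval x ≠ 0) {a : ℝ}
    (ha : 0 < p.eval a) : ∀ x : ℝ, 0 < p.eval x := by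
  intro x
  by_contra hx
  push_neg at hx
  have hx' : p.eval x < 0 := lt_of_le_of_ne hx (h x)
  have := intermediate_value_uIcc (a := a) (b := x) (f := fun y => p.eval y)
    (p.continuous.continuousOn)
  have h0 : (0:ℝ) ∈ uIcc (p.eval a) (p.eval x) := by
    rw [mem_uIcc]; right; constructor <;> linarith
  obtain ⟨y, _, hy⟩ := this h0
  exact h y hy

/-- interior root of nonneg polynomial gives square factor -/
lemma sq_dvd_of_interior_root {α β r : ℝ} {p : Polynomial ℝ}
    (hr : r ∈ Ioo α β) (hpos : ∀ x ∈ Icc α β, 0 ≤ p.eval x) (hroot : p.IsRoot r) :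
    (X - C r) ^ 2 ∣ p := by
  obtain ⟨q, hq⟩ := (dvd_iff_isRoot.mpr hroot)
  have hmin : IsLocalMin (fun x => p.eval x) r := by
    have hmem : Ioo α β ∈ nhds r := (isOpen_Ioo).mem_nhds hr
    refine Filter.eventually_of_mem hmem fun x hx => ?_
    simp only [hroot.eq_zero]
    exact hpos x (Ioo_subset_Icc_self hx)
  have hderiv : p.derivative.eval r = 0 := by
    have := hmin.deriv_eq_zero
    rwa [Polynomial.deriv] at this
  have hq' : q.IsRoot r := by
    have : p.derivative = q + (X - C r) * q.derivative := by
      rw [hq, derivative_mul]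
      simp only [derivative_sub, derivative_X, derivative_C, sub_zero, one_mul]
    have := congrArg (Polynomial.eval r) this
    simpa [hderiv] using this.symm
  obtain ⟨q2, hq2⟩ := (dvd_iff_isRoot.mpr hq')
  exact ⟨q2, by rw [hq, hq2]; ring⟩



lemma quad_dvd {p : Polynomial ℝ} (hd : 1 ≤ p.natDegree) (h : ∀ x : ℝ, p.eval x ≠ 0) :
    ∃ a b : ℝ, b ≠ 0 ∧ ((X - C a) ^ 2 + C (b ^ 2)) ∣ p := by
  have hp0 : p ≠ 0 := fun h0 => h 0 (by simp [h0])
  -- complex root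
  have hdeg : 0 < (p.map (algebraMap ℝ ℂ)).degree := by
    rw [degree_map_eq_of_injective (algebraMap ℝ ℂ).injective]
    exact natDegree_pos_iff_degree_pos.mp hd
  obtain ⟨z, hz⟩ := Complex.exists_root hdeg
  have hz' : aeval z p = 0 := by rwa [IsRoot, eval_map, ← aeval_def] at hz
  have him : z.im ≠ 0 := by
    intro h0
    apply h z.re
    have : aeval ((algebraMap ℝ ℂ) z.re) p = 0 := by
      rwa [show ((algebraMap ℝ ℂ) z.re) = z from Complex.ext rfl h0.symm]
    rw [aeval_algebraMap_apply_eq_algebraMap_eval] at this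
    exact (algebraMap ℝ ℂ).injective (by rw [this]; simp)
  refine ⟨z.re, z.im, him, ?_⟩
  set q0 : Polynomial ℝ := (X - C z.re) ^ 2 + C (z.im ^ 2) with hq0
  have hmono : q0.Monic := by
    have h1 : ((X - C z.re) ^ 2 : Polynomial ℝ).Monic := (monic_X_sub_C z.re).pow 2
    refine h1.add_of_left ?_
    have h2 : ((X - C z.re) ^ 2 : Polynomial ℝ).degree = 2 := by
      rw [degree_pow, degree_X_sub_C]; rfl
    rw [h2]
    exact lt_of_le_of_lt (degree_C_le) (by norm_num)
  have hq0z : aeval z q0 = 0 := by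
    rw [hq0]
    simp only [map_add, map_pow, map_sub, aeval_X, aeval_C]
    have : z - (algebraMap ℝ ℂ) z.re = z.im * Complex.I := by
      apply Complex.ext <;> simp
    rw [this]
    have : (algebraMap ℝ ℂ) z.im = (z.im : ℂ) := rfl
    rw [this, mul_pow, Complex.I_sq]
    ring
  set rem := p %ₘ q0 with hrem
  have hsplit : rem + q0 * (p /ₘ q0) = p := modByMonic_add_div p q0
  have hdegrem : rem.degree < 2 := by
    have := degree_modByMonic_lt p hmono
    rwa [show q0.degree = 2 from ?_] at this
    · rw [hq0]
      have h2 : ((X - C z.re) ^ 2 : Polynomial ℝ).degree = 2 := by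
        rw [degree_pow, degree_X_sub_C]; rfl
      rw [← h2]
      apply degree_add_eq_left_of_degree_lt
      rw [h2]; exact lt_of_le_of_lt (degree_C_le) (by norm_num)
  have hdegrem1 : rem.degree ≤ 1 := by
    rcases eq_or_ne rem 0 with h0 | h0
    · simp [h0]
    · rw [degree_eq_natDegree h0] at hdegrem ⊢
      exact_mod_cast Nat.lt_succ_iff.mp (by exact_mod_cast hdegrem)
  have hremeq : rem = C (rem.coeff 1) * X + C (rem.coeff 0) :=
    eq_X_add_C_of_degree_le_one hdegrem1
  -- evaluate at z
  have hremz : aeval z rem = 0 := by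
    have := congrArg (aeval z) hsplit
    simp only [map_add, map_mul, hq0z, zero_mul, add_zero] at this
    rw [this, hz']
  rw [hremeq] at hremz
  simp only [map_add, map_mul, aeval_X, aeval_C] at hremz
  have him' : (rem.coeff 1) * z.im = 0 := by
    have := congrArg Complex.im hremz
    simpa using this
  have hc1 : rem.coeff 1 = 0 := by
    rcases mul_eq_zero.mp him' with h' | h'
    · exact h'
    · exact absurd h' him
  have hc0 : rem.coeff 0 = 0 := by
    rw [hc1] at hremz
    simpa using hremz
  have hrem0 : rem = 0 := by rw [hremeq, hc1, hc0]; simp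
  refine ⟨p /ₘ q0, ?_⟩
  conv_lhs => rw [← hsplit]
  rw [hrem0, zero_add]

lemma quad_pos (a b : ℝ) (hb : b ≠ 0) (x : ℝ) :
    0 < ((X - C a) ^ 2 + C (b ^ 2)).eval x := by
  simp only [eval_add, eval_pow, eval_sub, eval_X, eval_C]
  positivity

/-- positive polynomial is a sum of two squares with degree control -/
lemma sum_two_sq : ∀ N (p : Polynomial ℝ), p.natDegree ≤ N → (∀ x : ℝ, 0 < p.eval x) →
    ∃ A B : Polynomial ℝ, 2 * A.natDegree ≤ p.natDegree ∧ 2 * B.natDegree ≤ p.natDegree ∧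
      p = A ^ 2 + B ^ 2 := by
  intro N
  induction N with
  | zero =>
    intro p hN hpos
    have h0 : p.natDegree = 0 := Nat.le_zero.mp hN
    have hc : 0 < p.coeff 0 := by
      rw [coeff_zero_eq_eval_zero]; exact hpos 0
    have hc' : p = C (p.coeff 0) := eq_C_of_natDegree_eq_zero h0
    refine ⟨C (Real.sqrt (p.coeff 0)), 0, by simp [h0], by simp, ?_⟩
    conv_lhs => rw [hc']
    rw [← C_pow, Real.sq_sqrt hc.le]
    simp
  | succ N ih =>
    intro p hN hpos
    rcases Nat.eq_zero_or_pos p.natDegree with h0 | h1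
    · exact ih p (by omega) hpos
    obtain ⟨a, b, hb, q, hq⟩ := quad_dvd h1 (fun x => (hpos x).ne')
    have hp0 : p ≠ 0 := fun h0 => by simpa [h0] using (hpos 0)
    have hq0 : q ≠ 0 := fun h0 => by rw [h0, mul_zero] at hq; exact hp0 hq
    have hquad0 : ((X - C a) ^ 2 + C (b ^ 2)) ≠ 0 :=
      fun h0 => by have hh := quad_pos a b hb 0; rw [h0] at hh; simp at hh
    have hquaddeg : ((X - C a) ^ 2 + C (b ^ 2)).natDegree = 2 := by
      have h2 : ((X - C a) ^ 2 : Polynomial ℝ).degree = 2 := by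
        rw [degree_pow, degree_X_sub_C]; rfl
      have : ((X - C a) ^ 2 + C (b ^ 2)).degree = 2 := by
        rw [← h2]
        apply degree_add_eq_left_of_degree_lt
        rw [h2]; exact lt_of_le_of_lt (degree_C_le) (by norm_num)
      exact natDegree_eq_of_degree_eq_some this
  -- degrees add
    have hdegs : p.natDegree = 2 + q.natDegree := by
      rw [hq, natDegree_mul hquad0 hq0, hquaddeg]
    have hqpos : ∀ x : ℝ, 0 < q.eval x := by
      intro x
      have h1 := hpos x
      rw [hq, eval_mul] at h1
      nlinarith [quad_pos a b hb x, h1]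
    obtain ⟨A, B, hA, hB, hAB⟩ := ih q (by omega) hqpos
    refine ⟨A * (X - C a) - B * C b, A * C b + B * (X - C a), ?_, ?_, ?_⟩
    · have h1 : (A * (X - C a) - B * C b).natDegree ≤ max (A.natDegree + 1) B.natDegree := by
        refine le_trans (natDegree_sub_le _ _) ?_
        apply max_le_max
        · exact le_trans natDegree_mul_le (by simp [natDegree_X_sub_C])
        · exact le_trans natDegree_mul_le (by simp)
      omega
    · have h1 : (A * C b + B * (X - C a)).natDegree ≤ max A.natDegree (B.natDegree + 1) := by
        refine le_trans (natDegree_add_le _ _) ?_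
        apply max_le_max
        · exact le_trans natDegree_mul_le (by simp)
        · exact le_trans natDegree_mul_le (by simp [natDegree_X_sub_C])
      omega
    · rw [hq, hAB, show (C (b^2) : Polynomial ℝ) = C b ^ 2 from by rw [C_pow]]; ring


-- ### SOSlt and more SOS lemmas

def SOSlt (n : ℕ) (t : Polynomial ℝ) : Prop :=
  ∃ (m : ℕ) (h : Fin m → Polynomial ℝ),
    (∀ i, (h i).natDegree + 1 ≤ n) ∧ t = ∑ i, (h i) ^ 2

lemma sos_mono {d e : ℕ} {p : Polynomial ℝ} (hde : d ≤ e) (hp : SOS d p) : SOS e p := by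
  obtain ⟨m, h, hd, rfl⟩ := hp
  exact ⟨m, h, fun i => le_trans (hd i) hde, rfl⟩

lemma soslt_zero (n : ℕ) : SOSlt n 0 := ⟨0, ![], by simp, by simp⟩

lemma soslt_of_sos {n : ℕ} {t : Polynomial ℝ} (hn : 1 ≤ n) (ht : SOS (n - 1) t) :
    SOSlt n t := by
  obtain ⟨m, h, hd, rfl⟩ := ht
  exact ⟨m, h, fun i => by have := hd i; omega, rfl⟩

lemma soslt_add {n : ℕ} {p q : Polynomial ℝ} (hp : SOSlt n p) (hq : SOSlt n q) :
    SOSlt n (p + q) := by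
  obtain ⟨m1, h1, hd1, rfl⟩ := hp
  obtain ⟨m2, h2, hd2, rfl⟩ := hq
  refine ⟨m1 + m2, Fin.append h1 h2, ?_, ?_⟩
  · intro i
    refine Fin.addCases (fun j => ?_) (fun j => ?_) i
    · rw [Fin.append_left]; exact hd1 _
    · rw [Fin.append_right]; exact hd2 _
  · rw [Fin.sum_univ_add]
    simp [Fin.append_left, Fin.append_right]

lemma soslt_smul {n : ℕ} {p : Polynomial ℝ} {c : ℝ} (hc : 0 ≤ c) (hp : SOSlt n p) :
    SOSlt n (C c * p) := by
  obtain ⟨m, h, hd, rfl⟩ := hp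
  refine ⟨m, fun i => C (Real.sqrt c) * h i, fun i => ?_, ?_⟩
  · show (C (Real.sqrt c) * h i).natDegree + 1 ≤ n
    have h1 := natDegree_C_mul_le (Real.sqrt c) (h i)
    have h2 := hd i
    omega
  · rw [Finset.mul_sum]
    refine Finset.sum_congr rfl fun i _ => ?_
    rw [mul_pow, ← C_pow, Real.sq_sqrt hc]

/-- multiplying an `SOSlt n` by the square of a degree-≤1 polynomial gives `SOS n` -/
lemma sos_of_soslt_mul_sq {n : ℕ} {t g : Polynomial ℝ} (ht : SOSlt n t)
    (hg : g.natDegree ≤ 1) : SOS n (g ^ 2 * t) := by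
  obtain ⟨m, h, hd, rfl⟩ := ht
  refine ⟨m, fun i => g * h i, fun i => ?_, ?_⟩
  · exact le_trans (natDegree_mul_le) (by have := hd i; omega)
  · rw [Finset.mul_sum]
    exact Finset.sum_congr rfl fun i _ => by rw [mul_pow]

lemma soslt_mul_sq {n : ℕ} {t g : Polynomial ℝ} (ht : SOSlt n t) (hg : g.natDegree ≤ 1) :
    SOSlt (n + 1) (g ^ 2 * t) := by
  obtain ⟨m, h, hd, rfl⟩ := ht
  refine ⟨m, fun i => g * h i, fun i => ?_, ?_⟩
  · show (g * h i).natDegree + 1 ≤ n + 1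
    have h1 := natDegree_mul_le (p := g) (q := h i)
    have h2 := hd i
    omega
  · rw [Finset.mul_sum]
    exact Finset.sum_congr rfl fun i _ => by rw [mul_pow]

lemma natDegree_CβX (b : ℝ) : (C b - X : Polynomial ℝ).natDegree ≤ 1 := by
  rw [show (C b - X : Polynomial ℝ) = -(X - C b) by ring, natDegree_neg, natDegree_X_sub_C]

-- ### factoring out roots, keeping nonnegativity

lemma factor_left {α β r : ℝ} (hαβ : α < β) {p : Polynomial ℝ} (hr : r ≤ α) (hp0 : p ≠ 0)
    (hroot : p.IsRoot r) (hpos : ∀ x ∈ Icc α β, 0 ≤ p.eval x) :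
    ∃ q : Polynomial ℝ, p = (X - C r) * q ∧ q.natDegree + 1 = p.natDegree ∧
      ∀ x ∈ Icc α β, 0 ≤ q.eval x := by
  obtain ⟨q, hq⟩ := dvd_iff_isRoot.mpr hroot
  have hq0 : q ≠ 0 := fun h0 => hp0 (by rw [hq, h0, mul_zero])
  refine ⟨q, hq, ?_, ?_⟩
  · rw [hq, natDegree_mul (X_sub_C_ne_zero r) hq0, natDegree_X_sub_C]
    omega
  · refine nonneg_Icc_of_Ioo hαβ fun x hx => ?_
    have hpx := hpos x (Ioo_subset_Icc_self hx)
    rw [hq, eval_mul, eval_sub, eval_X, eval_C] at hpx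
    have hxr : 0 < x - r := by have := hx.1; linarith
    nlinarith

lemma factor_right {α β r : ℝ} (hαβ : α < β) {p : Polynomial ℝ} (hr : β ≤ r) (hp0 : p ≠ 0)
    (hroot : p.IsRoot r) (hpos : ∀ x ∈ Icc α β, 0 ≤ p.eval x) :
    ∃ q : Polynomial ℝ, p = (C r - X) * q ∧ q.natDegree + 1 = p.natDegree ∧
      ∀ x ∈ Icc α β, 0 ≤ q.eval x := by
  obtain ⟨q0, hq0eq⟩ := dvd_iff_isRoot.mpr hroot
  have hq00 : q0 ≠ 0 := fun h0 => hp0 (by rw [hq0eq, h0, mul_zero])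
  refine ⟨-q0, by rw [hq0eq]; ring, ?_, ?_⟩
  · rw [natDegree_neg, hq0eq, natDegree_mul (X_sub_C_ne_zero r) hq00, natDegree_X_sub_C]
    omega
  · refine nonneg_Icc_of_Ioo hαβ fun x hx => ?_
    have hpx := hpos x (Ioo_subset_Icc_self hx)
    rw [hq0eq, eval_mul, eval_sub, eval_X, eval_C] at hpx
    have hxr : x - r < 0 := by have := hx.2; linarith
    rw [eval_neg]
    nlinarith

lemma factor_mid {α β r : ℝ} {p : Polynomial ℝ} (hr : r ∈ Ioo α β) (hp0 : p ≠ 0)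
    (hroot : p.IsRoot r) (hpos : ∀ x ∈ Icc α β, 0 ≤ p.eval x) :
    ∃ q : Polynomial ℝ, p = (X - C r) ^ 2 * q ∧ q.natDegree + 2 = p.natDegree ∧
      ∀ x ∈ Icc α β, 0 ≤ q.eval x := by
  obtain ⟨q, hq⟩ := sq_dvd_of_interior_root hr hpos hroot
  have hq0 : q ≠ 0 := fun h0 => hp0 (by rw [hq, h0, mul_zero])
  have hsq0 : ((X - C r) ^ 2 : Polynomial ℝ) ≠ 0 := pow_ne_zero 2 (X_sub_C_ne_zero r)
  refine ⟨q, hq, ?_, ?_⟩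
  · rw [hq, natDegree_mul hsq0 hq0, natDegree_pow, natDegree_X_sub_C]
    omega
  · have key : ∀ x ∈ Ioo α β, x ≠ r → 0 ≤ q.eval x := by
      intro x hx hxr
      have hpx := hpos x (Ioo_subset_Icc_self hx)
      rw [hq, eval_mul, eval_pow, eval_sub, eval_X, eval_C] at hpx
      have h2 : 0 < (x - r) ^ 2 := by
        have : x - r ≠ 0 := sub_ne_zero.mpr hxr
        positivity
      nlinarith
    intro x hx
    rcases le_or_gt x r with hxr | hxr
    · refine nonneg_Icc_of_Ioo hr.1 (fun y hy => key y ⟨hy.1, hy.2.trans hr.2⟩ hy.2.ne) x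
        ⟨hx.1, hxr⟩
    · refine nonneg_Icc_of_Ioo hr.2 (fun y hy => key y ⟨hr.1.trans hy.1, hy.2⟩ hy.1.ne') x
        ⟨hxr.le, hx.2⟩

-- ### decomposition predicates

def OddD (α β : ℝ) (n : ℕ) (p : Polynomial ℝ) : Prop :=
  ∃ s t : Polynomial ℝ, SOS n s ∧ SOS n t ∧ p = (X - C α) * s + (C β - X) * t

def EvenD (α β : ℝ) (n : ℕ) (p : Polynomial ℝ) : Prop :=
  ∃ s t : Polynomial ℝ, SOS n s ∧ SOSlt n t ∧ p = s + (X - C α) * (C β - X) * t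

lemma soslt_mono {d e : ℕ} {p : Polynomial ℝ} (hde : d ≤ e) (hp : SOSlt d p) : SOSlt e p := by
  obtain ⟨m, h, hd, rfl⟩ := hp
  exact ⟨m, h, fun i => le_trans (hd i) hde, rfl⟩

lemma oddD_zero (α β : ℝ) (n : ℕ) : OddD α β n 0 :=
  ⟨0, 0, sos_zero n, sos_zero n, by ring⟩

lemma evenD_zero (α β : ℝ) (n : ℕ) : EvenD α β n 0 :=
  ⟨0, 0, sos_zero n, soslt_zero n, by ring⟩

/-- the case where `p` has no real root -/
lemma no_root_case {α β : ℝ} (hαβ : α < β) {p : Polynomial ℝ}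
    (hpos : ∀ x ∈ Icc α β, 0 ≤ p.eval x) (hnr : ∀ x : ℝ, p.eval x ≠ 0) :
    (∀ n, p.natDegree ≤ 2 * n + 1 → OddD α β n p) ∧
    (∀ n, p.natDegree ≤ 2 * n → EvenD α β n p) := by
  have hβα : (0:ℝ) < β - α := sub_pos.mpr hαβ
  have hpα : 0 < p.eval α :=
    lt_of_le_of_ne (hpos α ⟨le_refl α, hαβ.le⟩) (Ne.symm (hnr α))
  have ppos := pos_of_no_root hnr hpα
  obtain ⟨A, B, hA, hB, hAB⟩ := sum_two_sq p.natDegree p le_rfl ppos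
  constructor
  · intro n hn
    have hAn : A.natDegree ≤ n := by omega
    have hBn : B.natDegree ≤ n := by omega
    set k := 1 / (β - α) with hkdef
    have hk0 : 0 ≤ k := by positivity
    have hk1 : k * (β - α) = 1 := one_div_mul_cancel hβα.ne'
    have hsos : SOS n (C k * (A ^ 2 + B ^ 2)) :=
      sos_smul hk0 (sos_add (sos_sq hAn) (sos_sq hBn))
    refine ⟨C k * (A ^ 2 + B ^ 2), C k * (A ^ 2 + B ^ 2), hsos, hsos, ?_⟩
    have e1 : (C k * (C β - C α) : Polynomial ℝ) = 1 := by
      rw [← C_sub, ← C_mul, hk1, C_1]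
    rw [hAB]
    linear_combination (-(A ^ 2 + B ^ 2)) * e1
  · intro n hn
    have hAn : A.natDegree ≤ n := by omega
    have hBn : B.natDegree ≤ n := by omega
    exact ⟨A ^ 2 + B ^ 2, 0, sos_add (sos_sq hAn) (sos_sq hBn), soslt_zero n,
      by rw [hAB]; ring⟩

lemma main (α β : ℝ) (hαβ : α < β) :
    ∀ N (p : Polynomial ℝ), p.natDegree ≤ N → (∀ x ∈ Icc α β, 0 ≤ p.eval x) →
      (∀ n, p.natDegree ≤ 2 * n + 1 → OddD α β n p) ∧
      (∀ n, p.natDegree ≤ 2 * n → EvenD α β n p) := by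
  have hβα : (0:ℝ) < β - α := sub_pos.mpr hαβ
  have hXα1 : (X - C α : Polynomial ℝ).natDegree ≤ 1 := le_of_eq (natDegree_X_sub_C α)
  have hβX1 : (C β - X : Polynomial ℝ).natDegree ≤ 1 := natDegree_CβX β
  intro N
  induction N with
  | zero =>
    intro p hN hpos
    rcases eq_or_ne p 0 with rfl | hp0
    · exact ⟨fun n _ => oddD_zero α β n, fun n _ => evenD_zero α β n⟩
    · have hnr : ∀ x : ℝ, p.eval x ≠ 0 := by
        intro x hx
        apply hp0
        have h0 : p.natDegree = 0 := Nat.le_zero.mp hN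
        have := eq_C_of_natDegree_eq_zero h0
        rw [this] at hx ⊢
        rw [eval_C] at hx
        rw [hx, C_0]
      exact no_root_case hαβ hpos hnr
  | succ N ih =>
    intro p hN hpos
    rcases eq_or_ne p 0 with rfl | hp0
    · exact ⟨fun n _ => oddD_zero α β n, fun n _ => evenD_zero α β n⟩
    by_cases hnr : ∀ x : ℝ, p.eval x ≠ 0
    · exact no_root_case hαβ hpos hnr
    push_neg at hnr
    obtain ⟨r, hr⟩ := hnr
    have hroot : p.IsRoot r := hr
    have hdeg1 : 1 ≤ p.natDegree := by
      by_contra h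
      push_neg at h
      apply hp0
      have h0 : p.natDegree = 0 := by omega
      have hc := eq_C_of_natDegree_eq_zero h0
      rw [hc] at hroot ⊢
      have : p.coeff 0 = 0 := by simpa [IsRoot] using hroot
      rw [this, C_0]
    rcases le_or_gt r α with hrα | hrα
    · -- root to the left of the interval
      obtain ⟨q, hpq, hdq, hqpos⟩ := factor_left hαβ hrα hp0 hroot hpos
      have hih := ih q (by omega) hqpos
      set c := (α - r) / (β - α) with hcdef
      have hc0 : 0 ≤ c := by
        apply div_nonneg _ hβα.le
        linarith
      have hc1 : c * (β - α) = α - r := div_mul_cancel₀ _ hβα.ne'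
      have hXr : (X - C r : Polynomial ℝ) = (X - C α) + C c * (C β - C α) := by
        have h1 : (C c * (C β - C α) : Polynomial ℝ) = C (α - r) := by
          rw [← C_sub, ← C_mul, hc1]
        rw [h1, C_sub]
        ring
      constructor
      · intro n hn
        obtain ⟨s, t, hs, ht, hqdec⟩ := hih.2 n (by omega)
        refine ⟨s + C c * s + C c * ((C β - X) ^ 2 * t),
          (X - C α) ^ 2 * t + C c * s + C c * ((X - C α) ^ 2 * t), ?_, ?_, ?_⟩
        · exact sos_add (sos_add hs (sos_smul hc0 hs))
            (sos_smul hc0 (sos_of_soslt_mul_sq ht hβX1))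
        · exact sos_add (sos_add (sos_of_soslt_mul_sq ht hXα1) (sos_smul hc0 hs))
            (sos_smul hc0 (sos_of_soslt_mul_sq ht hXα1))
        · rw [hpq, hqdec, hXr]; ring
      · intro n hn
        have hn1 : 1 ≤ n := by omega
        obtain ⟨s, t, hs, ht, hqdec⟩ := hih.1 (n - 1) (by omega)
        refine ⟨(X - C α) ^ 2 * s + C c * ((X - C α) ^ 2 * s) + C c * ((C β - X) ^ 2 * t),
          t + C c * s + C c * t, ?_, ?_, ?_⟩
        · have h1 : SOS n ((X - C α) ^ 2 * s) :=
            sos_mono (by omega) (sos_mul_sq hs hXα1)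
          have h2 : SOS n ((C β - X) ^ 2 * t) :=
            sos_mono (by omega) (sos_mul_sq ht hβX1)
          exact sos_add (sos_add h1 (sos_smul hc0 h1)) (sos_smul hc0 h2)
        · exact soslt_of_sos hn1
            (sos_add (sos_add ht (sos_smul hc0 hs)) (sos_smul hc0 ht))
        · rw [hpq, hqdec, hXr]; ring
    rcases le_or_gt β r with hrβ | hrβ
    · -- root to the right of the interval
      obtain ⟨q, hpq, hdq, hqpos⟩ := factor_right hαβ hrβ hp0 hroot hpos
      have hih := ih q (by omega) hqpos
      set c := (r - β) / (β - α) with hcdef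
      have hc0 : 0 ≤ c := by
        apply div_nonneg _ hβα.le
        linarith
      have hc1 : c * (β - α) = r - β := div_mul_cancel₀ _ hβα.ne'
      have hXr : (C r - X : Polynomial ℝ) = (C β - X) + C c * (C β - C α) := by
        have h1 : (C c * (C β - C α) : Polynomial ℝ) = C (r - β) := by
          rw [← C_sub, ← C_mul, hc1]
        rw [h1, C_sub]
        ring
      constructor
      · intro n hn
        obtain ⟨s, t, hs, ht, hqdec⟩ := hih.2 n (by omega)
        refine ⟨(C β - X) ^ 2 * t + C c * s + C c * ((C β - X) ^ 2 * t),
          s + C c * s + C c * ((X - C α) ^ 2 * t), ?_, ?_, ?_⟩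
        · exact sos_add (sos_add (sos_of_soslt_mul_sq ht hβX1) (sos_smul hc0 hs))
            (sos_smul hc0 (sos_of_soslt_mul_sq ht hβX1))
        · exact sos_add (sos_add hs (sos_smul hc0 hs))
            (sos_smul hc0 (sos_of_soslt_mul_sq ht hXα1))
        · rw [hpq, hqdec, hXr]; ring
      · intro n hn
        have hn1 : 1 ≤ n := by omega
        obtain ⟨s, t, hs, ht, hqdec⟩ := hih.1 (n - 1) (by omega)
        refine ⟨(C β - X) ^ 2 * t + C c * ((X - C α) ^ 2 * s) + C c * ((C β - X) ^ 2 * t),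
          s + C c * s + C c * t, ?_, ?_, ?_⟩
        · have h1 : SOS n ((X - C α) ^ 2 * s) :=
            sos_mono (by omega) (sos_mul_sq hs hXα1)
          have h2 : SOS n ((C β - X) ^ 2 * t) :=
            sos_mono (by omega) (sos_mul_sq ht hβX1)
          exact sos_add (sos_add h2 (sos_smul hc0 h1)) (sos_smul hc0 h2)
        · exact soslt_of_sos hn1
            (sos_add (sos_add hs (sos_smul hc0 hs)) (sos_smul hc0 ht))
        · rw [hpq, hqdec, hXr]; ring
    · -- root inside the interval
      obtain ⟨q, hpq, hdq, hqpos⟩ := factor_mid ⟨hrα, hrβ⟩ hp0 hroot hpos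
      have hih := ih q (by omega) hqpos
      have hXr1 : (X - C r : Polynomial ℝ).natDegree ≤ 1 := le_of_eq (natDegree_X_sub_C r)
      constructor
      · intro n hn
        have hn1 : 1 ≤ n := by omega
        obtain ⟨s, t, hs, ht, hqdec⟩ := hih.1 (n - 1) (by omega)
        refine ⟨(X - C r) ^ 2 * s, (X - C r) ^ 2 * t, ?_, ?_, ?_⟩
        · exact sos_mono (by omega) (sos_mul_sq hs hXr1)
        · exact sos_mono (by omega) (sos_mul_sq ht hXr1)
        · rw [hpq, hqdec]; ring
      · intro n hn
        have hn1 : 1 ≤ n := by omega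
        obtain ⟨s, t, hs, ht, hqdec⟩ := hih.2 (n - 1) (by omega)
        refine ⟨(X - C r) ^ 2 * s, (X - C r) ^ 2 * t, ?_, ?_, ?_⟩
        · exact sos_mono (by omega) (sos_mul_sq hs hXr1)
        · exact soslt_mono (by omega) (soslt_mul_sq ht hXr1)
        · rw [hpq, hqdec]; ring

end ML

theorem markov_lukacs_odd
    (α β : ℝ) (hαβ : α < β) (n : ℕ) (p : Polynomial ℝ)
    (hdeg : p.natDegree = 2 * n + 1)
    (hpos : ∀ x ∈ Set.Icc α β, 0 ≤ p.eval x) :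
    ∃ s t : Polynomial ℝ, IsSumOfSquaresOfDeg n s ∧ IsSumOfSquaresOfDeg n t ∧
      p = (Polynomial.X - Polynomial.C α) * s + (Polynomial.C β - Polynomial.X) * t := by
  obtain ⟨s, t, hs, ht, heq⟩ :=
    (ML.main α β hαβ p.natDegree p le_rfl hpos).1 n (le_of_eq hdeg)
  exact ⟨s, t, hs, ht, heq⟩
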